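/- Let G = (G1,v1)*(G2,v2) be a cubic, bridgeless graph. Then both G1 and G2 are bridgeless. -/

import Mathlib

open SimpleGraph

/-- A graph is cubic if every vertex has degree 3. -/
def IsCubic {V : Type*} (G : SimpleGraph V) : Prop :=
  ∀ v : V, (G.neighborSet v).ncard = 3

/-- A 2-factor of `G` is a 2-regular spanning subgraph of `G`. -/
def IsTwoFactor {V : Type*} (G : SimpleGraph V) (H : G.Subgraph) : Prop :=
  H.IsSpanning ∧ ∀ v : V, (H.neighborSet v).ncard = 2

/-- A graph is 2-factor Hamiltonian if every 2-factor of it is a Hamiltonian cycle,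
i.e. a connected 2-regular spanning subgraph. -/
def IsTwoFactorHamiltonian {V : Type*} (G : SimpleGraph V) : Prop :=
  ∀ H : G.Subgraph, IsTwoFactor G H → H.Connected

/-- A brace is a connected bipartite graph on at least four vertices in which every
matching of size at most two is contained in a perfect matching. -/
def IsBrace {V : Type*} (G : SimpleGraph V) : Prop :=
  G.Connected ∧ G.Colorable 2 ∧ 4 ≤ Nat.card V ∧
    ∀ M : G.Subgraph, M.IsMatching → M.edgeSet.ncard ≤ 2 →
      ∃ P : G.Subgraph, M ≤ P ∧ P.IsPerfectMatching

/-- The Heawood graph, as the point-line incidence graph of the Fano plane: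
points and lines are indexed by `Fin 7`, and point `p` lies on line `l` iff
`p + l ∈ {0, 1, 3}` (mod 7), `{0,1,3}` being a planar difference set mod 7. -/
def heawoodGraph : SimpleGraph (Fin 7 ⊕ Fin 7) :=
  SimpleGraph.fromRel fun a b => ∃ p l : Fin 7,
    a = Sum.inl p ∧ b = Sum.inr l ∧ (p + l = 0 ∨ p + l = 1 ∨ p + l = 3)

/-- A cycle (given as a closed walk) alternates between edges of the subgraph `M`
and edges not in `M`; the wrap-around pair is included by appending the first edge. -/
def IsAlternatingCycle {V : Type*} {G : SimpleGraph V} (M : G.Subgraph) {v : V}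
    (p : G.Walk v v) : Prop :=
  p.IsCycle ∧
    List.Chain' (fun e f => e ∈ M.edgeSet ↔ f ∉ M.edgeSet) (p.edges ++ p.edges.take 1)

/-- `σ` is a Pfaffian orientation of `G`: it orients every edge (exactly one direction),
and for every perfect matching `M` and every `M`-alternating cycle, the number of
its edges oriented in agreement with the direction of traversal is odd. -/
def IsPfaffianOrientation {V : Type*} (G : SimpleGraph V) (σ : V → V → Bool) : Prop :=
  (∀ u v : V, G.Adj u v → σ u v = !σ v u) ∧
  ∀ M : G.Subgraph, M.IsPerfectMatching →
    ∀ (v : V) (p : G.Walk v v), IsAlternatingCycle M p →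
      Odd (p.darts.filter fun d => σ d.toProd.1 d.toProd.2).length

/-- A graph with a perfect matching is Pfaffian if it admits a Pfaffian orientation. -/
def IsPfaffian {V : Type*} (G : SimpleGraph V) : Prop :=
  (∃ M : G.Subgraph, M.IsPerfectMatching) ∧ ∃ σ : V → V → Bool, IsPfaffianOrientation G σ

/-- The cut `∂X`: the set of edges of `G` with exactly one endpoint in `X`. -/
def edgeCut {V : Type*} (G : SimpleGraph V) (X : Set V) : Set (Sym2 V) :=
  {e | e ∈ G.edgeSet ∧ ∃ u w : V, e = s(u, w) ∧ u ∈ X ∧ w ∉ X}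

/-- A cut `∂X` is tight if every perfect matching contains exactly one of its edges. -/
def IsTightCut {V : Type*} (G : SimpleGraph V) (X : Set V) : Prop :=
  ∀ M : G.Subgraph, M.IsPerfectMatching → (edgeCut G X ∩ M.edgeSet).ncard = 1

/-- A cut `∂X` is trivial if `|X| = 1` or `|V(G) \ X| = 1`. -/
def IsTrivialCut {V : Type*} (X : Set V) : Prop :=
  X.ncard = 1 ∨ (Xᶜ : Set V).ncard = 1

/-- The tight cut contraction keeping `X`: contract `V(G) \ X` into a single vertex
(`Sum.inr ()`), deleting loops and parallel edges. -/
def contractOutside {V : Type*} (G : SimpleGraph V) (X : Set V) :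
    SimpleGraph (↥X ⊕ Unit) :=
  SimpleGraph.fromRel fun a b =>
    (∃ u v : X, a = Sum.inl u ∧ b = Sum.inl v ∧ G.Adj u v) ∨
    (∃ (u : X) (w : V), w ∉ X ∧ a = Sum.inl u ∧ b = Sum.inr () ∧ G.Adj u w)

/-- A graph is `k`-connected if it has more than `k` vertices and deleting any set of
fewer than `k` vertices leaves it connected. -/
def IsKConnected {V : Type*} (k : ℕ) (G : SimpleGraph V) : Prop :=
  k < Nat.card V ∧ ∀ S : Set V, S.ncard < k → (G.induce (Sᶜ : Set V)).Connected

/-- A graph is matching covered if it is connected, has an edge, and every edge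
lies in a perfect matching. -/
def IsMatchingCovered {V : Type*} (G : SimpleGraph V) : Prop :=
  G.Connected ∧ G.edgeSet.Nonempty ∧
    ∀ e ∈ G.edgeSet, ∃ M : G.Subgraph, M.IsPerfectMatching ∧ e ∈ M.edgeSet

/-- A graph is bridgeless if no edge is a bridge. -/
def Bridgeless {V : Type*} (G : SimpleGraph V) : Prop :=
  ∀ e : Sym2 V, ¬ G.IsBridge e

/-- `(A, B)` is a bipartition of `G` into the two colour classes `A` and `B`. -/
def IsBipartition {V : Type*} (G : SimpleGraph V) (A B : Set V) : Prop :=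
  A ∪ B = Set.univ ∧ Disjoint A B ∧
    ∀ u v : V, G.Adj u v → ((u ∈ A ∧ v ∈ B) ∨ (u ∈ B ∧ v ∈ A))

/-- `G` is the star product `(G1,v1)*(G2,v2)`, witnessed by the embeddings `f` of
`G1 - v1` and `g` of `G2 - v2` into `G`, and the bijection `m` matching the three
neighbours of `v1` to the three neighbours of `v2`: `v1` and `v2` have degree 3,
the images of `f` and `g` partition the vertices of `G`, and the edges of `G` are
exactly the edges of `G1 - v1`, the edges of `G2 - v2`, and the three matching edges
`f x — g (m x)` for `x` a neighbour of `v1`. -/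
def IsStarProductWitness {V V1 V2 : Type*} (G : SimpleGraph V)
    (G1 : SimpleGraph V1) (v1 : V1) (G2 : SimpleGraph V2) (v2 : V2)
    (f : V1 → V) (g : V2 → V) (m : V1 → V2) : Prop :=
  (G1.neighborSet v1).ncard = 3 ∧ (G2.neighborSet v2).ncard = 3 ∧
  Set.InjOn f {x | x ≠ v1} ∧ Set.InjOn g {y | y ≠ v2} ∧
  (∀ x y, x ≠ v1 → y ≠ v2 → f x ≠ g y) ∧
  (∀ v : V, (∃ x, x ≠ v1 ∧ f x = v) ∨ (∃ y, y ≠ v2 ∧ g y = v)) ∧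
  Set.BijOn m (G1.neighborSet v1) (G2.neighborSet v2) ∧
  (∀ a b : V, G.Adj a b ↔
    ((∃ x y, x ≠ v1 ∧ y ≠ v1 ∧ G1.Adj x y ∧ a = f x ∧ b = f y) ∨
     (∃ x y, x ≠ v2 ∧ y ≠ v2 ∧ G2.Adj x y ∧ a = g x ∧ b = g y) ∨
     (∃ x, G1.Adj v1 x ∧ ((a = f x ∧ b = g (m x)) ∨ (b = f x ∧ a = g (m x))))))

/-- `G` is a star product `(G1,v1)*(G2,v2)`. -/
def IsStarProduct {V V1 V2 : Type*} (G : SimpleGraph V)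
    (G1 : SimpleGraph V1) (v1 : V1) (G2 : SimpleGraph V2) (v2 : V2) : Prop :=
  ∃ (f : V1 → V) (g : V2 → V) (m : V1 → V2),
    IsStarProductWitness G G1 v1 G2 v2 f g m

/-- The principal 3-edge cut of a star product: the three added matching edges. -/
def principalCut {V V1 V2 : Type*} (G1 : SimpleGraph V1) (v1 : V1)
    (f : V1 → V) (g : V2 → V) (m : V1 → V2) : Set (Sym2 V) :=
  {e | ∃ x, G1.Adj v1 x ∧ e = s(f x, g (m x))}


/-- If no edge of `H` crosses `X`, reachability preserves membership in `X`. -/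
lemma cross_mem_aux {V : Type*} {H : SimpleGraph V} {X : Set V}
    (h : ∀ a b : V, H.Adj a b → (a ∈ X ↔ b ∈ X)) {u w : V} (r : H.Reachable u w) :
    u ∈ X ↔ w ∈ X := by
  obtain ⟨p⟩ := r
  induction p with
  | nil => exact Iff.rfl
  | cons ha _ ih => exact (h _ _ ha).trans ih

/-- If the cut of `X` in `G` is a single edge, `G` has a bridge. -/
lemma bridge_of_cut {V : Type*} {G : SimpleGraph V} (hGbl : Bridgeless G) {X : Set V}
    {u w : V} (hu : u ∈ X) (hw : w ∉ X)
    (hcross : ∀ a b : V, G.Adj a b → a ∈ X → b ∉ X → s(a, b) = s(u, w)) : False := by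
  apply hGbl s(u, w)
  rw [SimpleGraph.isBridge_iff]
  intro r
  have key : ∀ a b : V, (G \ fromEdgeSet {s(u, w)}).Adj a b → (a ∈ X ↔ b ∈ X) := by
    intro a b hab
    rw [sdiff_adj, fromEdgeSet_adj] at hab
    obtain ⟨hab, hne⟩ := hab
    have hne' : s(a, b) ≠ s(u, w) := fun h => hne ⟨h, hab.ne⟩
    constructor
    · intro ha; by_contra hb; exact hne' (hcross a b hab ha hb)
    · intro hb; by_contra ha
      exact hne' ((Sym2.eq_swap).trans (hcross b a hab.symm hb ha))
  exact hw ((cross_mem_aux key r).mp hu)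

/-- A star product witness together with bridgelessness of `G` forces `G1` bridgeless. -/
lemma witness_bridgeless {V V1 V2 : Type*}
    {G : SimpleGraph V} {G1 : SimpleGraph V1} {v1 : V1} {G2 : SimpleGraph V2} {v2 : V2}
    {f : V1 → V} {g : V2 → V} {m : V1 → V2}
    (hw : IsStarProductWitness G G1 v1 G2 v2 f g m)
    (hGbl : Bridgeless G) : Bridgeless G1 := by
  obtain ⟨h1, -, hf, -, hfg, -, hm, hE⟩ := hw
  have key : ∀ x y : V1, ¬(G1 \ fromEdgeSet {s(x, y)}).Reachable x y →
      ¬(G1 \ fromEdgeSet {s(x, y)}).Reachable x v1 → False := by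
    intro x y hnr hxv
    set G1' := G1 \ fromEdgeSet {s(x, y)} with hG1'
    set A : Set V1 := {z | G1'.Reachable x z} with hA
    have hxA : x ∈ A := Reachable.refl x
    have hv1A : v1 ∉ A := hxv
    have hyA : y ∉ A := hnr
    have hAne : ∀ z ∈ A, z ≠ v1 := fun z hz h => hv1A (h ▸ hz)
    -- crossing edges of G1 are exactly e
    have claim1 : ∀ a b : V1, G1.Adj a b → a ∈ A → b ∉ A → s(a, b) = s(x, y) := by
      intro a b hab ha hb
      by_contra hne
      apply hb
      refine Reachable.trans ha (Adj.reachable ?_)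
      rw [hG1', sdiff_adj, fromEdgeSet_adj]
      exact ⟨hab, fun h => hne h.1⟩
    -- image of A in G
    set X : Set V := {v | ∃ a, a ∈ A ∧ f a = v} with hX
    have hmemX : ∀ a ∈ A, f a ∈ X := fun a ha => ⟨a, ha, rfl⟩
    have hinX : ∀ p : V1, p ≠ v1 → f p ∈ X → p ∈ A := by
      rintro p hp ⟨a, ha, hfa⟩
      rwa [← hf (hAne a ha) hp hfa]
    have hgnX : ∀ q : V2, q ≠ v2 → g q ∉ X := by
      rintro q hq ⟨a, ha, hfa⟩
      exact hfg a q (hAne a ha) hq hfa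
    by_cases hy : y = v1
    · -- e is incident to v1; the matching edge at x is a bridge of G
      by_cases hxN : x ∈ G1.neighborSet v1
      · have hmxv2 : m x ≠ v2 := fun h => (G2.irrefl (h ▸ hm.mapsTo hxN))
        have hadj' : G.Adj (f x) (g (m x)) := by
          rw [hE]; exact Or.inr (Or.inr ⟨x, hxN, Or.inl ⟨rfl, rfl⟩⟩)
        refine bridge_of_cut hGbl (hmemX x hxA) (hgnX _ hmxv2) ?_
        intro a b hab haX hbX
        rw [hE] at hab
        rcases hab with ⟨p, q, hp, hq, hpq, rfl, rfl⟩ | ⟨p, q, hp, hq, hpq, rfl, rfl⟩ |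
          ⟨z, hz, ⟨rfl, rfl⟩ | ⟨rfl, rfl⟩⟩
        · exfalso
          have hpA : p ∈ A := hinX p hp haX
          have hqA : q ∉ A := fun h => hbX (hmemX q h)
          rcases Sym2.eq_iff.mp (claim1 p q hpq hpA hqA) with ⟨-, h⟩ | ⟨h, -⟩
          · exact hq (h.trans hy)
          · exact hp (h.trans hy)
        · exact absurd haX (hgnX p hp)
        · have hzv1 : z ≠ v1 := hz.ne'
          have hzA : z ∈ A := hinX z hzv1 haX
          have h := claim1 z v1 hz.symm hzA hv1A
          rcases Sym2.eq_iff.mp h with ⟨h1, -⟩ | ⟨-, h2⟩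
          · rw [h1]
          · exact absurd h2.symm (hAne x hxA)
        · exact absurd haX (hgnX _ (fun h => (G2.irrefl (h ▸ hm.mapsTo hz))))
      · obtain ⟨z0, hz0⟩ : (G1.neighborSet v1).Nonempty :=
          Set.nonempty_of_ncard_ne_zero (by rw [h1]; norm_num)
        have hmz0 : m z0 ≠ v2 := fun h => (G2.irrefl (h ▸ hm.mapsTo hz0))
        refine bridge_of_cut hGbl (hmemX x hxA) (hgnX _ hmz0) ?_
        intro a b hab haX hbX
        exfalso
        rw [hE] at hab
        rcases hab with ⟨p, q, hp, hq, hpq, rfl, rfl⟩ | ⟨p, q, hp, hq, hpq, rfl, rfl⟩ |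
          ⟨z, hz, ⟨rfl, rfl⟩ | ⟨rfl, rfl⟩⟩
        · have hpA : p ∈ A := hinX p hp haX
          have hqA : q ∉ A := fun h => hbX (hmemX q h)
          rcases Sym2.eq_iff.mp (claim1 p q hpq hpA hqA) with ⟨-, h⟩ | ⟨h, -⟩
          · exact hq (h.trans hy)
          · exact hp (h.trans hy)
        · exact absurd haX (hgnX p hp)
        · have hzv1 : z ≠ v1 := hz.ne'
          have hzA : z ∈ A := hinX z hzv1 haX
          have h := claim1 z v1 hz.symm hzA hv1A
          rcases Sym2.eq_iff.mp h with ⟨h1', -⟩ | ⟨-, h2⟩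
          · exact hxN (by rw [← h1']; exact hz)
          · exact hAne x hxA h2.symm
        · exact absurd haX (hgnX _ (fun h => (G2.irrefl (h ▸ hm.mapsTo hz))))
    · -- e not incident to v1; f e is a bridge of G
      have hxv1 : x ≠ v1 := hAne x hxA
      have hfyX : f y ∉ X := fun h => hyA (hinX y hy h)
      refine bridge_of_cut hGbl (hmemX x hxA) hfyX ?_
      intro a b hab haX hbX
      rw [hE] at hab
      rcases hab with ⟨p, q, hp, hq, hpq, rfl, rfl⟩ | ⟨p, q, hp, hq, hpq, rfl, rfl⟩ |
        ⟨z, hz, ⟨rfl, rfl⟩ | ⟨rfl, rfl⟩⟩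
      · have hpA : p ∈ A := hinX p hp haX
        have hqA : q ∉ A := fun h => hbX (hmemX q h)
        rcases Sym2.eq_iff.mp (claim1 p q hpq hpA hqA) with ⟨h1, h2⟩ | ⟨h1, h2⟩
        · rw [h1, h2]
        · rw [h1, h2, Sym2.eq_swap]
      · exact absurd haX (hgnX p hp)
      · exfalso
        have hzv1 : z ≠ v1 := hz.ne'
        have hzA : z ∈ A := hinX z hzv1 haX
        rcases Sym2.eq_iff.mp (claim1 z v1 hz.symm hzA hv1A) with ⟨-, h2⟩ | ⟨h2, -⟩
        · exact hy h2.symm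
        · exact hyA (h2 ▸ hzA)
      · exact absurd haX (hgnX _ (fun h => (G2.irrefl (h ▸ hm.mapsTo hz))))
  intro e
  induction e using Sym2.ind with
  | _ x y =>
    intro hbr
    rw [SimpleGraph.isBridge_iff] at hbr
    have hnr := hbr
    by_cases hxv : (G1 \ fromEdgeSet {s(x, y)}).Reachable x v1
    · have hnr' : ¬(G1 \ fromEdgeSet {s(y, x)}).Reachable y x := by
        rw [Sym2.eq_swap]; exact fun h => hnr h.symm
      have hyv : ¬(G1 \ fromEdgeSet {s(y, x)}).Reachable y v1 := by
        rw [Sym2.eq_swap]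
        exact fun h => hnr (hxv.trans h.symm)
      exact key y x hnr' hyv
    · exact key x y hnr hxv

/-- Star products can be flipped. -/
lemma isStarProduct_symm {V V1 V2 : Type*}
    {G : SimpleGraph V} {G1 : SimpleGraph V1} {v1 : V1} {G2 : SimpleGraph V2} {v2 : V2}
    (hsp : IsStarProduct G G1 v1 G2 v2) : IsStarProduct G G2 v2 G1 v1 := by
  classical
  obtain ⟨f, g, m, h1, h2, hf, hg, hfg, hcov, hm, hE⟩ := hsp
  set m' : V2 → V1 := fun y =>
    if h : ∃ x ∈ G1.neighborSet v1, m x = y then h.choose else v1 with hm'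
  have hm'spec : ∀ y ∈ G2.neighborSet v2, m' y ∈ G1.neighborSet v1 ∧ m (m' y) = y := by
    intro y hy
    obtain ⟨x, hx, hmx⟩ := hm.surjOn hy
    have h : ∃ x ∈ G1.neighborSet v1, m x = y := ⟨x, hx, hmx⟩
    simp only [hm', dif_pos h]
    exact ⟨h.choose_spec.1, h.choose_spec.2⟩
  have hm'x : ∀ x ∈ G1.neighborSet v1, m' (m x) = x := by
    intro x hx
    have hmx : m x ∈ G2.neighborSet v2 := hm.mapsTo hx
    exact hm.injOn (hm'spec _ hmx).1 hx (hm'spec _ hmx).2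
  refine ⟨g, f, m', h2, h1, hg, hf,
    (fun y x hy hx h => (hfg x y hx hy h.symm)), fun v => (hcov v).symm, ?_, ?_⟩
  · refine ⟨fun y hy => (hm'spec y hy).1, ?_, ?_⟩
    · intro y1 hy1 y2 hy2 heq
      have e1 := (hm'spec y1 hy1).2
      rw [heq, (hm'spec y2 hy2).2] at e1
      exact e1.symm
    · intro x hx
      exact ⟨m x, hm.mapsTo hx, hm'x x hx⟩
  · intro a b
    rw [hE a b]
    constructor
    · rintro (⟨p, q, hp, hq, h, rfl, rfl⟩ | ⟨p, q, hp, hq, h, rfl, rfl⟩ |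
        ⟨z, hz, ⟨rfl, rfl⟩ | ⟨rfl, rfl⟩⟩)
      · exact Or.inr (Or.inl ⟨p, q, hp, hq, h, rfl, rfl⟩)
      · exact Or.inl ⟨p, q, hp, hq, h, rfl, rfl⟩
      · exact Or.inr (Or.inr ⟨m z, hm.mapsTo hz, Or.inr ⟨rfl, (congrArg f (hm'x z hz)).symm⟩⟩)
      · exact Or.inr (Or.inr ⟨m z, hm.mapsTo hz, Or.inl ⟨rfl, (congrArg f (hm'x z hz)).symm⟩⟩)
    · rintro (⟨p, q, hp, hq, h, rfl, rfl⟩ | ⟨p, q, hp, hq, h, rfl, rfl⟩ |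
        ⟨z, hz, ⟨rfl, rfl⟩ | ⟨rfl, rfl⟩⟩)
      · exact Or.inr (Or.inl ⟨p, q, hp, hq, h, rfl, rfl⟩)
      · exact Or.inl ⟨p, q, hp, hq, h, rfl, rfl⟩
      · refine Or.inr (Or.inr ⟨m' z, (hm'spec z hz).1, Or.inr ⟨rfl, ?_⟩⟩)
        rw [(hm'spec z hz).2]
      · refine Or.inr (Or.inr ⟨m' z, (hm'spec z hz).1, Or.inl ⟨rfl, ?_⟩⟩)
        rw [(hm'spec z hz).2]
    

/-- Let `G = (G1,v1)*(G2,v2)` be a cubic, bridgeless graph. Then both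
`G1` and `G2` are bridgeless. -/
theorem starProduct_bridgeless {V V1 V2 : Type*}
    [Fintype V] [Fintype V1] [Fintype V2]
    (G : SimpleGraph V) (G1 : SimpleGraph V1) (v1 : V1) (G2 : SimpleGraph V2) (v2 : V2)
    (hsp : IsStarProduct G G1 v1 G2 v2)
    (hGc : IsCubic G) (hGbl : Bridgeless G) :
    Bridgeless G1 ∧ Bridgeless G2 := by
  obtain ⟨f, g, m, hw⟩ := hsp
  obtain ⟨f', g', m', hw'⟩ := isStarProduct_symm ⟨f, g, m, hw⟩
  exact ⟨witness_bridgeless hw hGbl, witness_bridgeless hw' hGbl⟩
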